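/- The Poisson log-likelihood ℓ is twice continuously differentiable on ℝ^p, and for every β, φ, ψ ∈ ℝ^p its second derivative satisfies D²ℓ(β)(φ,ψ) = − ∫_D ⟨φ, z(u)⟩ · ⟨ψ, z(u)⟩ · exp(⟨β, z(u)⟩) du; equivalently D²ℓ(β) = −H(β) where H(β) = ∫_D z(u) z(u)ᵀ exp(⟨β, z(u)⟩) du. -/

import Mathlib

open MeasureTheory
open scoped InnerProductSpace

private lemma integrable_of_bdd {α G : Type*} [MeasurableSpace α] [NormedAddCommGroup G]
    {μ : Measure α} [IsFiniteMeasure μ] {f : α → G} (hf : AEStronglyMeasurable f μ)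
    {B : ℝ} (hB : ∀ a, ‖f a‖ ≤ B) : Integrable f μ :=
  ⟨hf, HasFiniteIntegral.of_bounded (ae_of_all μ hB)⟩

set_option maxHeartbeats 2000000 in
theorem stmt2 (d p : ℕ)
    (D : Set (EuclideanSpace ℝ (Fin d))) (hD : MeasurableSet D)
    (hDfin : volume D < ⊤)
    (z : EuclideanSpace ℝ (Fin d) → EuclideanSpace ℝ (Fin p))
    (hzm : Measurable z) (C : ℝ) (hzb : ∀ u, ‖z u‖ ≤ C)
    (x : Finset (EuclideanSpace ℝ (Fin d))) (hx : ↑x ⊆ D)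
    (ℓ : EuclideanSpace ℝ (Fin p) → ℝ)
    (hℓ : ∀ β, ℓ β = (∑ u ∈ x, ⟪β, z u⟫_ℝ) - ∫ u in D, Real.exp ⟪β, z u⟫_ℝ)
    (H : EuclideanSpace ℝ (Fin p) → Matrix (Fin p) (Fin p) ℝ)
    (hH : ∀ β i j, H β i j = ∫ u in D, z u i * z u j * Real.exp ⟪β, z u⟫_ℝ) :
    ContDiff ℝ 2 ℓ ∧
      ∀ β φ ψ : EuclideanSpace ℝ (Fin p),
        fderiv ℝ (fderiv ℝ ℓ) β φ ψ =
          - ∫ u in D, ⟪φ, z u⟫_ℝ * ⟪ψ, z u⟫_ℝ * Real.exp ⟪β, z u⟫_ℝ ∧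
        fderiv ℝ (fderiv ℝ ℓ) β φ ψ = -(∑ i, ∑ j, φ i * H β i j * ψ j) := by
  classical
  have hC0 : 0 ≤ C := le_trans (norm_nonneg _) (hzb 0)
  set μ : Measure (EuclideanSpace ℝ (Fin d)) := volume.restrict D with hμdef
  haveI : IsFiniteMeasure μ := ⟨by simpa [hμdef, Measure.restrict_apply_univ] using hDfin⟩
  set L : EuclideanSpace ℝ (Fin d) → (EuclideanSpace ℝ (Fin p) →L[ℝ] ℝ) :=
    fun a => innerSL ℝ (z a) with hLdef
  have hLval : ∀ a (β : EuclideanSpace ℝ (Fin p)), L a β = ⟪β, z a⟫_ℝ := by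
    intro a β; rw [hLdef, innerSL_apply_apply]; exact real_inner_comm _ _
  have hLnorm : ∀ a, ‖L a‖ ≤ C := by
    intro a; rw [hLdef]; rw [innerSL_apply_norm]; exact hzb a
  have hLm : AEStronglyMeasurable L μ :=
    (innerSL ℝ).continuous.comp_aestronglyMeasurable hzm.aestronglyMeasurable
  have hip : ∀ (β : EuclideanSpace ℝ (Fin p)) a, ⟪β, z a⟫_ℝ ≤ ‖β‖ * C :=
    fun β a => le_trans (real_inner_le_norm β (z a))
      (mul_le_mul_of_nonneg_left (hzb a) (norm_nonneg β))
  -- pointwise derivatives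
  have hder1 : ∀ (β : EuclideanSpace ℝ (Fin p)) a,
      HasFDerivAt (fun β' : EuclideanSpace ℝ (Fin p) => Real.exp ⟪β', z a⟫_ℝ)
        (Real.exp ⟪β, z a⟫_ℝ • L a) β := by
    intro β a
    have h := (Real.hasDerivAt_exp (L a β)).comp_hasFDerivAt β (L a).hasFDerivAt
    simpa only [Function.comp_def, hLval] using h
  have hder2 : ∀ (β : EuclideanSpace ℝ (Fin p)) a,
      HasFDerivAt (fun β' : EuclideanSpace ℝ (Fin p) => Real.exp ⟪β', z a⟫_ℝ • L a)
        ((Real.exp ⟪β, z a⟫_ℝ • L a).smulRight (L a)) β :=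
    fun β a => (hder1 β a).smul_const (L a)
  -- measurability of integrands
  have hmeas_exp : ∀ β : EuclideanSpace ℝ (Fin p),
      AEStronglyMeasurable (fun a => Real.exp ⟪β, z a⟫_ℝ) μ :=
    fun β => (Real.continuous_exp.comp (innerSL ℝ β).continuous).comp_aestronglyMeasurable
      hzm.aestronglyMeasurable
  have hmeas_F' : ∀ β : EuclideanSpace ℝ (Fin p),
      AEStronglyMeasurable (fun a => Real.exp ⟪β, z a⟫_ℝ • L a) μ :=
    fun β => (hmeas_exp β).smul hLm
  have hmeas_M : ∀ β : EuclideanSpace ℝ (Fin p),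
      AEStronglyMeasurable (fun a => (Real.exp ⟪β, z a⟫_ℝ • L a).smulRight (L a)) μ := by
    intro β
    exact (ContinuousLinearMap.smulRightL ℝ (EuclideanSpace ℝ (Fin p))
      (EuclideanSpace ℝ (Fin p) →L[ℝ] ℝ)).continuous₂.comp_aestronglyMeasurable₂
      (hmeas_F' β) hLm
  -- norm bounds
  have hnorm_F' : ∀ (β : EuclideanSpace ℝ (Fin p)) a,
      ‖Real.exp ⟪β, z a⟫_ℝ • L a‖ ≤ Real.exp (‖β‖ * C) * C := by
    intro β a
    rw [norm_smul (Real.exp ⟪β, z a⟫_ℝ) (L a), Real.norm_eq_abs, abs_of_pos (Real.exp_pos _)]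
    exact mul_le_mul (Real.exp_le_exp.2 (hip β a)) (hLnorm a) (norm_nonneg _)
      (Real.exp_pos _).le
  have hnorm_M : ∀ (β : EuclideanSpace ℝ (Fin p)) a,
      ‖(Real.exp ⟪β, z a⟫_ℝ • L a).smulRight (L a)‖ ≤ Real.exp (‖β‖ * C) * C * C := by
    intro β a
    rw [ContinuousLinearMap.norm_smulRight_apply]
    exact mul_le_mul (hnorm_F' β a) (hLnorm a) (norm_nonneg _)
      (by positivity)
  have hball : ∀ (β₀ β : EuclideanSpace ℝ (Fin p)), β ∈ Metric.ball β₀ 1 →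
      ‖β‖ * C ≤ (‖β₀‖ + 1) * C := by
    intro β₀ β hβ
    have h1 : ‖β - β₀‖ < 1 := by simpa [dist_eq_norm] using hβ
    have h2 : ‖β‖ - ‖β₀‖ ≤ ‖β - β₀‖ := norm_sub_norm_le β β₀
    have : ‖β‖ ≤ ‖β₀‖ + 1 := by linarith
    exact mul_le_mul_of_nonneg_right this hC0
  -- integrability
  have hint_exp : ∀ β : EuclideanSpace ℝ (Fin p),
      Integrable (fun a => Real.exp ⟪β, z a⟫_ℝ) μ := by
    intro β
    refine integrable_of_bdd (hmeas_exp β) (B := Real.exp (‖β‖ * C)) fun a => ?_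
    rw [Real.norm_eq_abs, abs_of_pos (Real.exp_pos _)]
    exact Real.exp_le_exp.2 (hip β a)
  have hint_F' : ∀ β : EuclideanSpace ℝ (Fin p),
      Integrable (fun a => Real.exp ⟪β, z a⟫_ℝ • L a) μ :=
    fun β => integrable_of_bdd (hmeas_F' β) (hnorm_F' β)
  letI : NormedAddCommGroup (EuclideanSpace ℝ (Fin p) →L[ℝ] EuclideanSpace ℝ (Fin p) →L[ℝ] ℝ) :=
    inferInstance
  have hint_M : ∀ β : EuclideanSpace ℝ (Fin p),
      Integrable (fun a => (Real.exp ⟪β, z a⟫_ℝ • L a).smulRight (L a)) μ :=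
    fun β => integrable_of_bdd (hmeas_M β) (hnorm_M β)
  -- first derivative of the integral term
  have key1 : ∀ β₀ : EuclideanSpace ℝ (Fin p),
      HasFDerivAt (fun β => ∫ a, Real.exp ⟪β, z a⟫_ℝ ∂μ)
        (∫ a, Real.exp ⟪β₀, z a⟫_ℝ • L a ∂μ) β₀ := by
    intro β₀
    apply hasFDerivAt_integral_of_dominated_of_fderiv_le (s := Metric.ball β₀ 1)
      (F := fun β a => Real.exp ⟪β, z a⟫_ℝ)
      (F' := fun β a => Real.exp ⟪β, z a⟫_ℝ • L a)
      (bound := fun _ => Real.exp ((‖β₀‖ + 1) * C) * C) (Metric.ball_mem_nhds β₀ one_pos)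
    · filter_upwards with β using hmeas_exp β
    · exact hint_exp β₀
    · exact hmeas_F' β₀
    · refine ae_of_all _ fun a β hβ => ?_
      exact le_trans (hnorm_F' β a)
        (mul_le_mul_of_nonneg_right (Real.exp_le_exp.2 (hball β₀ β hβ)) hC0)
    · exact integrable_const _
    · exact ae_of_all _ fun a β _ => hder1 β a
  -- second derivative
  have key2 : ∀ β₀ : EuclideanSpace ℝ (Fin p),
      HasFDerivAt (fun β => ∫ a, Real.exp ⟪β, z a⟫_ℝ • L a ∂μ)
        (∫ a, (Real.exp ⟪β₀, z a⟫_ℝ • L a).smulRight (L a) ∂μ) β₀ := by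
    intro β₀
    apply hasFDerivAt_integral_of_dominated_of_fderiv_le (s := Metric.ball β₀ 1)
      (F := fun β a => Real.exp ⟪β, z a⟫_ℝ • L a)
      (F' := fun β a => (Real.exp ⟪β, z a⟫_ℝ • L a).smulRight (L a))
      (bound := fun _ => Real.exp ((‖β₀‖ + 1) * C) * C * C) (Metric.ball_mem_nhds β₀ one_pos)
    · filter_upwards with β using hmeas_F' β
    · exact hint_F' β₀
    · exact hmeas_M β₀
    · refine ae_of_all _ fun a β hβ => ?_
      exact le_trans (hnorm_M β a)
        (mul_le_mul_of_nonneg_right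
          (mul_le_mul_of_nonneg_right (Real.exp_le_exp.2 (hball β₀ β hβ)) hC0) hC0)
    · exact integrable_const _
    · exact ae_of_all _ fun a β _ => hder2 β a
  -- continuity of the second derivative
  have key3 : Continuous fun β : EuclideanSpace ℝ (Fin p) =>
      ∫ a, (Real.exp ⟪β, z a⟫_ℝ • L a).smulRight (L a) ∂μ := by
    rw [continuous_iff_continuousAt]
    intro β₀
    apply continuousAt_of_dominated (bound := fun _ => Real.exp ((‖β₀‖ + 1) * C) * C * C)
    · filter_upwards with β using hmeas_M β
    · filter_upwards [Metric.ball_mem_nhds β₀ one_pos] with β hβ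
      refine ae_of_all _ fun a => ?_
      exact le_trans (hnorm_M β a)
        (mul_le_mul_of_nonneg_right
          (mul_le_mul_of_nonneg_right (Real.exp_le_exp.2 (hball β₀ β hβ)) hC0) hC0)
    · exact integrable_const _
    · refine ae_of_all _ fun a => ?_
      exact (((ContinuousLinearMap.smulRightL ℝ (EuclideanSpace ℝ (Fin p))
        (EuclideanSpace ℝ (Fin p) →L[ℝ] ℝ)).continuous₂.comp₂
        ((Real.continuous_exp.comp (continuous_id.inner continuous_const)).smul
          continuous_const) continuous_const)).continuousAt
  -- linear part
  set A : EuclideanSpace ℝ (Fin p) →L[ℝ] ℝ := ∑ u ∈ x, innerSL ℝ (z u) with hAdef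
  have hAval : ∀ β, A β = ∑ u ∈ x, ⟪β, z u⟫_ℝ := by
    intro β
    rw [hAdef, ContinuousLinearMap.sum_apply]
    simp only [innerSL_apply_apply]
    exact Finset.sum_congr rfl fun u _ => real_inner_comm _ _
  have hℓeq : ℓ = fun β => A β - ∫ a, Real.exp ⟪β, z a⟫_ℝ ∂μ := by
    funext β; rw [hℓ β, hAval]
  have hdℓ : ∀ β, HasFDerivAt ℓ (A - ∫ a, Real.exp ⟪β, z a⟫_ℝ • L a ∂μ) β := by
    intro β; rw [hℓeq]; exact A.hasFDerivAt.sub (key1 β)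
  have hfd : fderiv ℝ ℓ = fun β => A - ∫ a, Real.exp ⟪β, z a⟫_ℝ • L a ∂μ :=
    funext fun β => (hdℓ β).fderiv
  have hdd : ∀ β, HasFDerivAt (fderiv ℝ ℓ)
      (-(∫ a, (Real.exp ⟪β, z a⟫_ℝ • L a).smulRight (L a) ∂μ)) β := by
    intro β
    rw [hfd]
    exact ((hasFDerivAt_const A β).sub (key2 β)).congr_fderiv (by simp)
  have hfd2 : ∀ β, fderiv ℝ (fderiv ℝ ℓ) β
      = -(∫ a, (Real.exp ⟪β, z a⟫_ℝ • L a).smulRight (L a) ∂μ) :=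
    fun β => (hdd β).fderiv
  -- smoothness
  have hcd : ContDiff ℝ 2 ℓ := by
    rw [show (2 : WithTop ℕ∞) = 1 + 1 from rfl, contDiff_succ_iff_fderiv]
    refine ⟨fun β => (hdℓ β).differentiableAt, by simp, ?_⟩
    rw [contDiff_one_iff_fderiv]
    refine ⟨fun β => (hdd β).differentiableAt, ?_⟩
    rw [funext hfd2]
    exact key3.neg
  refine ⟨hcd, fun β φ ψ => ?_⟩
  -- the value of the second derivative
  have happly : fderiv ℝ (fderiv ℝ ℓ) β φ ψ
      = - ∫ a, Real.exp ⟪β, z a⟫_ℝ * ⟪φ, z a⟫_ℝ * ⟪ψ, z a⟫_ℝ ∂μ := by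
    rw [hfd2 β]
    rw [ContinuousLinearMap.neg_apply, ContinuousLinearMap.neg_apply]
    rw [ContinuousLinearMap.integral_apply (hint_M β) φ]
    rw [ContinuousLinearMap.integral_apply ((hint_M β).apply_continuousLinearMap φ) ψ]
    congr 1
    refine integral_congr_ae (ae_of_all _ fun a => ?_)
    simp only [ContinuousLinearMap.smulRight_apply, ContinuousLinearMap.smul_apply,
      smul_eq_mul, hLval]
    all_goals ring
  have heq1 : fderiv ℝ (fderiv ℝ ℓ) β φ ψ
      = - ∫ a, ⟪φ, z a⟫_ℝ * ⟪ψ, z a⟫_ℝ * Real.exp ⟪β, z a⟫_ℝ ∂μ := by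
    rw [happly]
    congr 1
    exact integral_congr_ae (ae_of_all _ fun a => by ring)
  refine ⟨heq1, ?_⟩
  rw [heq1]
  congr 1
  -- identify the integral with the quadratic form of H
  have hcoord : ∀ (v : EuclideanSpace ℝ (Fin p)) i, |v i| ≤ ‖v‖ := by
    intro v i
    have h1 : v i = ⟪v, EuclideanSpace.single i (1 : ℝ)⟫_ℝ := by
      rw [EuclideanSpace.inner_single_right]; simp
    rw [h1]
    calc |⟪v, EuclideanSpace.single i (1 : ℝ)⟫_ℝ|
        ≤ ‖v‖ * ‖EuclideanSpace.single i (1 : ℝ)‖ := abs_real_inner_le_norm _ _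
      _ = ‖v‖ := by rw [EuclideanSpace.norm_single]; simp
  have hmeas_coord : ∀ i : Fin p, Measurable fun a => z a i := by
    intro i
    exact ((EuclideanSpace.proj i : EuclideanSpace ℝ (Fin p) →L[ℝ] ℝ)).continuous.measurable.comp
      hzm
  have hterm_int : ∀ i j : Fin p,
      Integrable (fun a => z a i * z a j * Real.exp ⟪β, z a⟫_ℝ) μ := by
    intro i j
    refine integrable_of_bdd ?_ (B := C * C * Real.exp (‖β‖ * C)) ?_
    · exact (((hmeas_coord i).mul (hmeas_coord j)).mul
        ((Real.continuous_exp.comp (innerSL ℝ β).continuous).measurable.comp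
          hzm)).aestronglyMeasurable
    · intro a
      rw [Real.norm_eq_abs, abs_mul, abs_mul, abs_of_pos (Real.exp_pos _)]
      have h1 : |z a i| ≤ C := le_trans (hcoord _ i) (hzb a)
      have h2 : |z a j| ≤ C := le_trans (hcoord _ j) (hzb a)
      have h3 : Real.exp ⟪β, z a⟫_ℝ ≤ Real.exp (‖β‖ * C) := Real.exp_le_exp.2 (hip β a)
      have := mul_le_mul (mul_le_mul h1 h2 (abs_nonneg _) hC0) h3
        (Real.exp_pos _).le (by positivity)
      exact this
  calc (∫ a, ⟪φ, z a⟫_ℝ * ⟪ψ, z a⟫_ℝ * Real.exp ⟪β, z a⟫_ℝ ∂μ)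
      = ∫ a, ∑ i, ∑ j, φ i * (z a i * z a j * Real.exp ⟪β, z a⟫_ℝ) * ψ j ∂μ := by
        refine integral_congr_ae (ae_of_all _ fun a => ?_)
        dsimp only
        rw [show ⟪φ, z a⟫_ℝ = ∑ i, φ i * z a i from by
            simp [PiLp.inner_apply, RCLike.inner_apply, starRingEnd_apply, star_trivial]
            exact Finset.sum_congr rfl fun _ _ => mul_comm _ _,
          show ⟪ψ, z a⟫_ℝ = ∑ j, ψ j * z a j from by
            simp [PiLp.inner_apply, RCLike.inner_apply, starRingEnd_apply, star_trivial]
            exact Finset.sum_congr rfl fun _ _ => mul_comm _ _]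
        rw [Finset.sum_mul_sum, Finset.sum_mul]
        refine Finset.sum_congr rfl fun i _ => ?_
        rw [Finset.sum_mul]
        refine Finset.sum_congr rfl fun j _ => ?_
        ring
    _ = ∑ i, ∑ j, φ i * H β i j * ψ j := by
        have hint_ij : ∀ i j : Fin p,
            Integrable (fun a => φ i * (z a i * z a j * Real.exp ⟪β, z a⟫_ℝ) * ψ j) μ :=
          fun i j => ((hterm_int i j).const_mul (φ i)).mul_const (ψ j)
        rw [integral_finset_sum _ (fun i _ =>
          integrable_finset_sum _ (fun j _ => hint_ij i j))]
        refine Finset.sum_congr rfl fun i _ => ?_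
        rw [integral_finset_sum _ (fun j _ => hint_ij i j)]
        refine Finset.sum_congr rfl fun j _ => ?_
        rw [hH β i j, ← integral_const_mul, ← integral_mul_const]
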